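/- A finite-dimensional real vector space V admitting a linear endomorphism J of V ⊕ V* with J² = -Id and J + J* = 0 (with respect to the canonical neutral pairing) must be even dimensional. -/

import Mathlib

/-- The canonical neutral pairing on `V ⊕ V*`: `⟨X+α, Y+β⟩ = ½(β(X) + α(Y))`. -/
noncomputable def pair {V : Type*} [AddCommGroup V] [Module ℝ V]
    (u v : V × Module.Dual ℝ V) : ℝ := (v.2 u.1 + u.2 v.1) / 2

section aux
variable {V : Type*} [AddCommGroup V] [Module ℝ V]

lemma pair_symm (u v : V × Module.Dual ℝ V) : pair u v = pair v u := by
  simp [pair]; ring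

lemma pair_add_left (u u' w : V × Module.Dual ℝ V) :
    pair (u + u') w = pair u w + pair u' w := by
  simp [pair, map_add]; ring

lemma pair_add_right (u w w' : V × Module.Dual ℝ V) :
    pair u (w + w') = pair u w + pair u w' := by
  simp [pair, map_add]; ring

lemma pair_smul_left (a : ℝ) (u w : V × Module.Dual ℝ V) :
    pair (a • u) w = a * pair u w := by
  simp [pair, map_smul]; ring

lemma pair_smul_right (a : ℝ) (u w : V × Module.Dual ℝ V) :
    pair u (a • w) = a * pair u w := by
  simp [pair, map_smul]; ring

lemma pair_zero_left (w : V × Module.Dual ℝ V) : pair 0 w = 0 := by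
  simp [pair]

lemma even_of_conj {P : Type*} [AddCommGroup P] [Module ℝ P] [FiniteDimensional ℝ P]
    (f : P →ₗ[ℝ] P) (h : ∀ x, f (f x) = -x) : Even (Module.finrank ℝ P) := by
  have h1 : LinearMap.det f * LinearMap.det f = (-1 : ℝ) ^ Module.finrank ℝ P := by
    rw [← LinearMap.det_comp]
    have h2 : f ∘ₗ f = (-1 : ℝ) • LinearMap.id := by
      ext x; simp [h x]
    rw [h2, LinearMap.det_smul, LinearMap.det_id, mul_one]
  rcases Nat.even_or_odd (Module.finrank ℝ P) with he | ho
  · exact he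
  · exfalso
    rw [ho.neg_one_pow] at h1
    nlinarith [mul_self_nonneg (LinearMap.det f)]

end aux

set_option maxHeartbeats 1000000 in
set_option synthInstance.maxHeartbeats 200000 in
/-- A vector space admitting a generalized almost complex structure
(`J² = -Id`, `J` skew-adjoint for the canonical pairing) is even dimensional. -/
theorem stmt1 {V : Type*} [AddCommGroup V] [Module ℝ V] [FiniteDimensional ℝ V]
    (J : (V × Module.Dual ℝ V) →ₗ[ℝ] (V × Module.Dual ℝ V))
    (hJ2 : ∀ u, J (J u) = -u)
    (hskew : ∀ u v, pair (J u) v + pair u (J v) = 0) :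
    Even (Module.finrank ℝ V) := by
  classical
  let n := Module.finrank ℝ V
  have hW : Module.finrank ℝ (V × Module.Dual ℝ V) = 2 * n := by
    have h1 : Module.finrank ℝ (Module.Dual ℝ V) = Module.finrank ℝ V :=
      (Module.finBasis ℝ V).toDualEquiv.symm.finrank_eq
    have h2 : Module.finrank ℝ (V × Module.Dual ℝ V)
        = Module.finrank ℝ V + Module.finrank ℝ (Module.Dual ℝ V) := Module.finrank_prod
    omega
  -- the auxiliary inner product coming from a basis
  let b := Module.finBasis ℝ V
  let g : V →ₗ[ℝ] Module.Dual ℝ V := b.toDual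
  have hg_eq : ∀ x : V, g x x = ∑ i, b.repr x i * b.repr x i := by
    intro x
    have h1 : g x x = g x (∑ i, b.repr x i • b i) := by rw [b.sum_repr]
    rw [h1, map_sum]
    congr 1; ext i
    rw [map_smul, smul_eq_mul, Module.Basis.toDual_apply_left]
  have hg_nonneg : ∀ x : V, 0 ≤ g x x := by
    intro x; rw [hg_eq]
    exact Finset.sum_nonneg fun i _ => mul_self_nonneg _
  have hg_pos : ∀ x : V, x ≠ 0 → 0 < g x x := by
    intro x hx
    rw [hg_eq]
    obtain ⟨i, hi⟩ : ∃ i, b.repr x i ≠ 0 := by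
      by_contra hcon
      push_neg at hcon
      exact hx (b.forall_coord_eq_zero_iff.mp
        (fun i => by simpa [Module.Basis.coord_apply] using hcon i))
    exact Finset.sum_pos' (fun j _ => mul_self_nonneg _) ⟨i, Finset.mem_univ i, mul_self_pos.mpr hi⟩
  -- positive and negative model subspaces
  let negMap : V →ₗ[ℝ] (V × Module.Dual ℝ V) := LinearMap.prod LinearMap.id (-g)
  let posMap : V →ₗ[ℝ] (V × Module.Dual ℝ V) := LinearMap.prod LinearMap.id g
  have hneg_inj : Function.Injective negMap := by
    intro x y hxy
    have := congrArg Prod.fst hxy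
    simpa [negMap] using this
  have hpos_inj : Function.Injective posMap := by
    intro x y hxy
    have := congrArg Prod.fst hxy
    simpa [posMap] using this
  let Wneg := LinearMap.range negMap
  let Wpos := LinearMap.range posMap
  have hWneg_rank : Module.finrank ℝ Wneg = n := LinearMap.finrank_range_of_inj hneg_inj
  have hWpos_rank : Module.finrank ℝ Wpos = n := LinearMap.finrank_range_of_inj hpos_inj
  have hWneg_neg : ∀ u ∈ Wneg, u ≠ 0 → pair u u < 0 := by
    rintro u ⟨x, rfl⟩ hu
    have hx : x ≠ 0 := by rintro rfl; exact hu (by simp [negMap])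
    have h : pair (negMap x) (negMap x) = -(g x x) := by
      show ((-(g x)) x + (-(g x)) x) / 2 = -(g x x)
      simp only [LinearMap.neg_apply]; ring
    rw [h]
    simpa using hg_pos x hx
  have hWpos_pos : ∀ u ∈ Wpos, u ≠ 0 → 0 < pair u u := by
    rintro u ⟨x, rfl⟩ hu
    have hx : x ≠ 0 := by rintro rfl; exact hu (by simp [posMap])
    have h : pair (posMap x) (posMap x) = g x x := by
      show (g x x + g x x) / 2 = g x x
      ring
    rw [h]
    exact hg_pos x hx
  -- any positive (resp. nonpositive) definite subspace has rank at most n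
  have hbound : ∀ P : Submodule ℝ (V × Module.Dual ℝ V), (∀ u ∈ P, u ≠ 0 → 0 < pair u u) →
      Module.finrank ℝ P ≤ n := by
    intro P hP
    have hdisj : P ⊓ Wneg = ⊥ := by
      rw [Submodule.eq_bot_iff]
      rintro u ⟨huP, huN⟩
      by_contra hu
      exact absurd (hP u huP hu) (not_lt.mpr (hWneg_neg u huN hu).le)
    have h1 := Submodule.finrank_sup_add_finrank_inf_eq P Wneg
    rw [hdisj] at h1
    have h2 : Module.finrank ℝ ↥(P ⊔ Wneg) ≤ 2 * n := hW ▸ Submodule.finrank_le _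
    have h3 : Module.finrank ℝ (⊥ : Submodule ℝ (V × Module.Dual ℝ V)) = 0 := finrank_bot ℝ (V × Module.Dual ℝ V)
    omega
  have hboundneg : ∀ P : Submodule ℝ (V × Module.Dual ℝ V), (∀ u ∈ P, pair u u ≤ 0) →
      Module.finrank ℝ P ≤ n := by
    intro P hP
    have hdisj : P ⊓ Wpos = ⊥ := by
      rw [Submodule.eq_bot_iff]
      rintro u ⟨huP, huN⟩
      by_contra hu
      exact absurd (hWpos_pos u huN hu) (not_lt.mpr (hP u huP))
    have h1 := Submodule.finrank_sup_add_finrank_inf_eq P Wpos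
    rw [hdisj] at h1
    have h2 : Module.finrank ℝ ↥(P ⊔ Wpos) ≤ 2 * n := hW ▸ Submodule.finrank_le _
    have h3 : Module.finrank ℝ (⊥ : Submodule ℝ (V × Module.Dual ℝ V)) = 0 := finrank_bot ℝ (V × Module.Dual ℝ V)
    omega
  -- the bilinear pairing as a bilinear map
  let B : (V × Module.Dual ℝ V) →ₗ[ℝ] (V × Module.Dual ℝ V) →ₗ[ℝ] ℝ :=
    LinearMap.mk₂ ℝ pair pair_add_left pair_smul_left pair_add_right pair_smul_right
  have hBapp : ∀ u v : V × Module.Dual ℝ V, B u v = pair u v := fun u v => rfl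
  -- extension step
  have hstep : ∀ P : Submodule ℝ (V × Module.Dual ℝ V), (∀ u ∈ P, J u ∈ P) →
      (∀ u ∈ P, u ≠ 0 → 0 < pair u u) → Module.finrank ℝ P + 1 ≤ n →
      ∃ P' : Submodule ℝ (V × Module.Dual ℝ V), (∀ u ∈ P', J u ∈ P') ∧
        (∀ u ∈ P', u ≠ 0 → 0 < pair u u) ∧
        Module.finrank ℝ P < Module.finrank ℝ P' := by
    intro P hPJ hPpos hPrank
    -- the orthogonal complement of P
    let φ : (V × Module.Dual ℝ V) →ₗ[ℝ] Module.Dual ℝ P := B.compl₂ P.subtype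
    let K := LinearMap.ker φ
    have hKmem : ∀ w : V × Module.Dual ℝ V, w ∈ K ↔ ∀ p ∈ P, pair w p = 0 := by
      intro w
      constructor
      · intro hw p hp
        have := congrFun (congrArg DFunLike.coe hw) ⟨p, hp⟩
        simpa [φ, hBapp] using this
      · intro hw
        ext p
        simpa [φ, hBapp] using hw p p.2
    haveI : Module.Free ℝ P := Module.Free.of_divisionRing ℝ P
    have e : (↥P) ≃ₗ[ℝ] Module.Dual ℝ ↥P := (Module.finBasis ℝ P).toDualEquiv
    haveI : FiniteDimensional ℝ (Module.Dual ℝ ↥P) := Module.Finite.equiv e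
    have hKrank : 2 * n ≤ Module.finrank ℝ P + Module.finrank ℝ K := by
      have h1 := LinearMap.finrank_range_add_finrank_ker φ
      have h2 : Module.finrank ℝ (LinearMap.range φ) ≤ Module.finrank ℝ (Module.Dual ℝ P) :=
        Submodule.finrank_le _
      have h3 : Module.finrank ℝ (Module.Dual ℝ ↥P) = Module.finrank ℝ ↥P :=
        e.symm.finrank_eq
      have h4 : Module.finrank ℝ K = Module.finrank ℝ (LinearMap.ker φ) := rfl
      omega
    -- find a positive vector orthogonal to P
    obtain ⟨v, hvK, hvpos⟩ : ∃ v ∈ K, 0 < pair v v := by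
      by_contra hcon
      push_neg at hcon
      have := hboundneg K hcon
      omega
    have hvK' : ∀ p ∈ P, pair v p = 0 := (hKmem v).mp hvK
    -- key pairing identities
    have hpJv : ∀ p ∈ P, pair p (J v) = 0 := by
      intro p hp
      have h1 := hskew p v
      have h2 : pair (J p) v = 0 := (pair_symm _ _).trans (hvK' (J p) (hPJ p hp))
      linarith
    have hpv : ∀ p ∈ P, pair p v = 0 := fun p hp => (pair_symm _ _).trans (hvK' p hp)
    have hvJv : pair v (J v) = 0 := by
      have h1 := hskew v v
      have h2 := pair_symm (J v) v
      linarith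
    have hJvJv : pair (J v) (J v) = pair v v := by
      have h1 := hskew (J v) v
      have h2 : pair (J (J v)) v = -pair v v := by
        rw [hJ2 v]
        rw [show (-v : V × Module.Dual ℝ V) = (-1 : ℝ) • v from (neg_one_smul ℝ v).symm,
          pair_smul_left]; ring
      linarith
    have hvP : v ∉ P := fun hv => absurd (hvK' v hv) (ne_of_gt hvpos)
    -- the extended subspace
    let P' := P ⊔ Submodule.span ℝ {v, J v}
    have hmem : ∀ w ∈ P', ∃ p ∈ P, ∃ a b : ℝ, w = p + a • v + b • J v := by
      intro w hw
      obtain ⟨p, hp, q, hq, rfl⟩ := Submodule.mem_sup.mp hw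
      obtain ⟨a, c, rfl⟩ := Submodule.mem_span_pair.mp hq
      exact ⟨p, hp, a, c, by abel⟩
    have hmem' : ∀ p ∈ P, ∀ a c : ℝ, p + a • v + c • J v ∈ P' := by
      intro p hp a c
      refine Submodule.add_mem _ (Submodule.add_mem _ (Submodule.mem_sup_left hp)
        (Submodule.mem_sup_right ?_)) (Submodule.mem_sup_right ?_)
      · exact Submodule.smul_mem _ _ (Submodule.subset_span (by simp))
      · exact Submodule.smul_mem _ _ (Submodule.subset_span (by simp))
    have hQ : ∀ p ∈ P, ∀ a c : ℝ, pair (p + a • v + c • J v) (p + a • v + c • J v)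
        = pair p p + (a ^ 2 + c ^ 2) * pair v v := by
      intro p hp a c
      have f1 : pair p v = 0 := hpv p hp
      have f2 : pair p (J v) = 0 := hpJv p hp
      have f3 : pair v p = 0 := hvK' p hp
      have f4 : pair (J v) p = 0 := (pair_symm _ _).trans f2
      have f5 : pair (J v) v = 0 := (pair_symm _ _).trans hvJv
      simp only [pair_add_left, pair_add_right, pair_smul_left, pair_smul_right]
      rw [f1, f2, f3, f4, f5, hvJv, hJvJv]
      ring
    refine ⟨P', ?_, ?_, ?_⟩
    · -- J-invariance
      intro w hw
      obtain ⟨p, hp, a, c, rfl⟩ := hmem w hw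
      have hJw : J (p + a • v + c • J v) = (J p + (-c) • v) + a • J v := by
        rw [map_add, map_add, map_smul, map_smul, hJ2 v]
        module
      rw [hJw]
      have : (J p + (-c) • v) + a • J v = J p + (-c) • v + a • J v := by abel
      rw [this]
      exact hmem' (J p) (hPJ p hp) (-c) a
    · -- positive definiteness
      intro w hw hwne
      obtain ⟨p, hp, a, c, rfl⟩ := hmem w hw
      rw [hQ p hp a c]
      have hppnn : 0 ≤ pair p p := by
        rcases eq_or_ne p 0 with rfl | hpne
        · rw [pair_zero_left]
        · exact (hPpos p hp hpne).le
      rcases eq_or_ne p 0 with rfl | hpne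
      · have hac : a ≠ 0 ∨ c ≠ 0 := by
          by_contra hcon
          push_neg at hcon
          obtain ⟨rfl, rfl⟩ := hcon
          simp at hwne
        have : 0 < a ^ 2 + c ^ 2 := by
          rcases hac with h | h
          · positivity
          · positivity
        nlinarith
      · nlinarith [hPpos p hp hpne, sq_nonneg a, sq_nonneg c, hvpos]
    · -- rank goes up
      have hlt : P < P' := by
        refine lt_of_le_of_ne le_sup_left (fun he => hvP ?_)
        rw [he]
        exact Submodule.mem_sup_right (Submodule.subset_span (by simp))
      exact Submodule.finrank_lt_finrank_of_lt hlt
  -- build a J-invariant positive subspace of dimension n by induction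
  have hind : ∀ k : ℕ, k ≤ n → ∃ P : Submodule ℝ (V × Module.Dual ℝ V), (∀ u ∈ P, J u ∈ P) ∧
      (∀ u ∈ P, u ≠ 0 → 0 < pair u u) ∧ k ≤ Module.finrank ℝ P := by
    intro k
    induction k with
    | zero =>
      intro _
      exact ⟨⊥, by simp, by rintro u hu hne; simp at hu; exact absurd hu hne, Nat.zero_le _⟩
    | succ k ih =>
      intro hk
      obtain ⟨P, hPJ, hPpos, hPrank⟩ := ih (Nat.le_of_succ_le hk)
      rcases le_or_gt (k + 1) (Module.finrank ℝ P) with h | h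
      · exact ⟨P, hPJ, hPpos, h⟩
      · have hr : Module.finrank ℝ P = k := le_antisymm (Nat.lt_succ_iff.mp h) hPrank
        obtain ⟨P', hP'J, hP'pos, hP'rank⟩ := hstep P hPJ hPpos (by omega)
        exact ⟨P', hP'J, hP'pos, by omega⟩
  obtain ⟨P, hPJ, hPpos, hPrank⟩ := hind n le_rfl
  have hPn : Module.finrank ℝ P = n := le_antisymm (hbound P hPpos) hPrank
  have heven : Even (Module.finrank ℝ P) := by
    refine even_of_conj (P := ↥P) (J.restrict hPJ) (fun x => Subtype.ext ?_)
    simpa [LinearMap.restrict_apply] using hJ2 (x : V × Module.Dual ℝ V)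
  rwa [hPn] at heven
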